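/- arXiv:1106.1258 — 5 statements merged into one kernel-verified Lean document; each statement's English description precedes it below -/
import Mathlib

section
/- Let k ≥ 3 be an integer and let c be any edge coloring of G_k. If i ≠ j are indices with 1 ≤ i, j ≤ k such that c(u v_i) = c(u v_j) and c(v_i w_i) = c(v_j w_j), then every rainbow path in G_k from v_i to v_j has at least 5 edges (and hence uses at least 5 distinct colors). -/
/-- Vertex type of the graph `G_k`: the hub `u`, the vertices `v_1,…,v_k`
and the vertices `w_1,…,w_k` (all `2k+1` vertices distinct). -/
abbrev Vk (k : ℕ) : Type := Unit ⊕ Fin k ⊕ Fin k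

/-- The hub vertex `u` of `G_k`. -/
def uVtx (k : ℕ) : Vk k := Sum.inl ()

/-- The vertex `v_i` of `G_k`. -/
def vVtx {k : ℕ} (i : Fin k) : Vk k := Sum.inr (Sum.inl i)

/-- The vertex `w_i` of `G_k`. -/
def wVtx {k : ℕ} (i : Fin k) : Vk k := Sum.inr (Sum.inr i)

/-- The generating relation for the edges of `G_k`: `u ∼ v_i`, `v_i ∼ w_i` and
`w_i ∼ w_j` (the requirement `i ≠ j` is taken care of by `SimpleGraph.fromRel`,
which discards loops). -/
def GkRel (k : ℕ) : Vk k → Vk k → Prop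
  | Sum.inl _, Sum.inr (Sum.inl _) => True
  | Sum.inr (Sum.inl i), Sum.inr (Sum.inr j) => i = j
  | Sum.inr (Sum.inr _), Sum.inr (Sum.inr _) => True
  | _, _ => False

/-- The graph `G_k`: `u` joined to each `v_i`, `v_i` joined to `w_i`, and
`{w_1,…,w_k}` forming a clique. -/
def Gk (k : ℕ) : SimpleGraph (Vk k) := SimpleGraph.fromRel (GkRel k)

lemma adj_vVtx {k : ℕ} {i : Fin k} {x : Vk k} (h : (Gk k).Adj (vVtx i) x) :
    x = uVtx k ∨ x = wVtx i := by
  rw [Gk, SimpleGraph.fromRel_adj] at h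
  rcases x with _ | x | x
  · exact Or.inl rfl
  · exfalso; revert h; simp [GkRel, vVtx]
  · right
    rcases h with ⟨-, h | h⟩
    · simp only [vVtx, GkRel] at h; simp [wVtx, h]
    · simp [GkRel, vVtx] at h

lemma adj_uVtx {k : ℕ} {x : Vk k} (h : (Gk k).Adj (uVtx k) x) : ∃ m, x = vVtx m := by
  rw [Gk, SimpleGraph.fromRel_adj] at h
  rcases x with _ | x | x
  · exact absurd rfl h.1
  · exact ⟨x, rfl⟩
  · exfalso; revert h; simp [GkRel, uVtx]

lemma adj_wVtx {k : ℕ} {m : Fin k} {x : Vk k} (h : (Gk k).Adj (wVtx m) x) :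
    x = vVtx m ∨ ∃ m', x = wVtx m' := by
  rw [Gk, SimpleGraph.fromRel_adj] at h
  rcases x with _ | x | x
  · exfalso; revert h; simp [GkRel, wVtx, uVtx]
  · left
    rcases h with ⟨-, h | h⟩
    · simp [GkRel, wVtx] at h
    · simp only [wVtx, GkRel] at h; simp [vVtx, h]
  · exact Or.inr ⟨x, rfl⟩

lemma one_le_length {k : ℕ} {a b : Vk k} (h : a ≠ b) (t : (Gk k).Walk a b) :
    1 ≤ t.length := by
  cases t with
  | nil => exact absurd rfl h
  | cons h q => simp [Nat.succ_le_succ]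

/-- A graph `G` with an edge coloring `c` is *rainbow connected* if every pair of distinct
vertices is joined by a path whose edges all receive distinct colors. -/
def RainbowConnected {α β : Type*} (G : SimpleGraph α) (c : Sym2 α → β) : Prop :=
  ∀ x y : α, x ≠ y → ∃ p : G.Walk x y, p.IsPath ∧ (p.edges.map c).Nodup

/-- Let `k ≥ 3` and let `c` be any edge coloring of `G_k`. If `i ≠ j` are such that
`c(u v_i) = c(u v_j)` and `c(v_i w_i) = c(v_j w_j)`, then every rainbow path in `G_k`
from `v_i` to `v_j` has at least 5 edges (and hence uses at least 5 distinct colors). -/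
theorem rainbow_path_length_ge_five {k : ℕ} (hk : 3 ≤ k) (c : Sym2 (Vk k) → ℕ)
    (i j : Fin k) (hij : i ≠ j)
    (h1 : c s(uVtx k, vVtx i) = c s(uVtx k, vVtx j))
    (h2 : c s(vVtx i, wVtx i) = c s(vVtx j, wVtx j)) :
    ∀ p : (Gk k).Walk (vVtx i) (vVtx j), p.IsPath → (p.edges.map c).Nodup →
      5 ≤ p.length ∧ 5 ≤ (p.edges.map c).toFinset.card := by
  intro p hp hnd
  have key : 5 ≤ p.length := by
    cases p with
    | nil => exact absurd (by simpa [vVtx] using (rfl : vVtx i = vVtx j)) hij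
    | cons h q =>
      rename_i x
      rcases adj_vVtx h with rfl | rfl
      · -- first step to u
        cases q with
        | cons h' r =>
          rename_i y
          obtain ⟨m, rfl⟩ := adj_uVtx h'
          by_cases hmj : m = j
          · subst hmj
            rw [SimpleGraph.Walk.cons_isPath_iff, SimpleGraph.Walk.cons_isPath_iff] at hp
            have hrnil := SimpleGraph.Walk.isPath_iff_eq_nil.1 hp.1.1
            subst hrnil
            exfalso
            simp only [SimpleGraph.Walk.edges_cons, SimpleGraph.Walk.edges_nil,
              List.map_cons, List.map_nil, List.nodup_cons, List.mem_cons,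
              List.not_mem_nil, or_false, List.nodup_nil, and_true] at hnd
            refine hnd.1 ?_
            have hs : s(vVtx i, uVtx k) = s(uVtx k, vVtx i) := Sym2.eq_swap
            rw [hs]; exact h1
          · cases r with
            | nil => exact absurd rfl hmj
            | cons h'' s =>
              rename_i z
              rcases adj_vVtx h'' with rfl | rfl
              · -- back to u: repeated vertex
                exfalso
                rw [SimpleGraph.Walk.cons_isPath_iff,
                  SimpleGraph.Walk.cons_isPath_iff] at hp
                exact hp.1.2 (by
                  simp only [SimpleGraph.Walk.support_cons, List.mem_cons]
                  exact Or.inr s.start_mem_support)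
              · -- to w_m
                cases s with
                | cons h3 t =>
                  rename_i z'
                  rcases adj_wVtx h3 with rfl | ⟨m', rfl⟩
                  · -- back to v_m: repeated vertex
                    exfalso
                    rw [SimpleGraph.Walk.cons_isPath_iff, SimpleGraph.Walk.cons_isPath_iff,
                      SimpleGraph.Walk.cons_isPath_iff] at hp
                    exact hp.1.1.2 (by
                      simp only [SimpleGraph.Walk.support_cons, List.mem_cons]
                      exact Or.inr t.start_mem_support)
                  · have ht := one_le_length (by simp [wVtx, vVtx]) t
                    simp only [SimpleGraph.Walk.length_cons]
                    omega
      · -- first step to w_i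
        cases q with
        | cons h' r =>
          rename_i y
          rcases adj_wVtx h' with rfl | ⟨m, rfl⟩
          · -- back to v_i: repeated vertex
            exfalso
            rw [SimpleGraph.Walk.cons_isPath_iff] at hp
            exact hp.2 (by
              simp only [SimpleGraph.Walk.support_cons, List.mem_cons]
              exact Or.inr r.start_mem_support)
          · cases r with
            | cons h'' s =>
              rename_i z
              rcases adj_wVtx h'' with rfl | ⟨m', rfl⟩
              · -- to v_m
                by_cases hmj : m = j
                · subst hmj
                  rw [SimpleGraph.Walk.cons_isPath_iff, SimpleGraph.Walk.cons_isPath_iff,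
                    SimpleGraph.Walk.cons_isPath_iff] at hp
                  have hsnil := SimpleGraph.Walk.isPath_iff_eq_nil.1 hp.1.1.1
                  subst hsnil
                  exfalso
                  simp only [SimpleGraph.Walk.edges_cons, SimpleGraph.Walk.edges_nil,
                    List.map_cons, List.map_nil, List.nodup_cons, List.mem_cons,
                    List.not_mem_nil, or_false, List.nodup_nil, and_true] at hnd
                  refine hnd.1 (Or.inr ?_)
                  have hs : s(wVtx m, vVtx m) = s(vVtx m, wVtx m) := Sym2.eq_swap
                  rw [hs]; exact h2
                · cases s with
                  | nil => exact absurd rfl hmj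
                  | cons h3 t =>
                    rename_i z'
                    rcases adj_vVtx h3 with rfl | rfl
                    · have ht := one_le_length (by simp [uVtx, vVtx]) t
                      simp only [SimpleGraph.Walk.length_cons]
                      omega
                    · -- back to w_m: repeated vertex
                      exfalso
                      rw [SimpleGraph.Walk.cons_isPath_iff, SimpleGraph.Walk.cons_isPath_iff,
                        SimpleGraph.Walk.cons_isPath_iff] at hp
                      exact hp.1.1.2 (by
                        simp only [SimpleGraph.Walk.support_cons, List.mem_cons]
                        exact Or.inr t.start_mem_support)
              · -- to w_{m'}
                cases s with
                | cons h3 t =>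
                  rename_i z'
                  rcases adj_wVtx h3 with rfl | ⟨m'', rfl⟩
                  · -- to v_{m'}
                    by_cases hm'j : m' = j
                    · subst hm'j
                      rw [SimpleGraph.Walk.cons_isPath_iff, SimpleGraph.Walk.cons_isPath_iff,
                        SimpleGraph.Walk.cons_isPath_iff,
                        SimpleGraph.Walk.cons_isPath_iff] at hp
                      have htnil := SimpleGraph.Walk.isPath_iff_eq_nil.1 hp.1.1.1.1
                      subst htnil
                      exfalso
                      simp only [SimpleGraph.Walk.edges_cons, SimpleGraph.Walk.edges_nil,
                        List.map_cons, List.map_nil, List.nodup_cons, List.mem_cons,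
                        List.not_mem_nil, or_false, List.nodup_nil, and_true] at hnd
                      refine hnd.1 (Or.inr (Or.inr ?_))
                      have hs : s(wVtx m', vVtx m') = s(vVtx m', wVtx m') := Sym2.eq_swap
                      rw [hs]; exact h2
                    · have ht := one_le_length (by simp [vVtx, hm'j, Fin.ext_iff]) t
                      simp only [SimpleGraph.Walk.length_cons]
                      omega
                  · have ht := one_le_length (by simp [wVtx, vVtx]) t
                    simp only [SimpleGraph.Walk.length_cons]
                    omega
  refine ⟨key, ?_⟩
  rw [List.toFinset_card_of_nodup hnd, List.length_map, SimpleGraph.Walk.length_edges]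
  exact key
end

section
/- For every integer k ≥ 2, the edge coloring of G_k with 5 colors defined by c(u v_1) = 1, c(v_1 w_1) = 2, c(u v_i) = 3 and c(v_i w_i) = 4 for all 2 ≤ i ≤ k, and c(w_i w_j) = 5 for all 1 ≤ i < j ≤ k, makes G_k rainbow connected; in particular rc(G_k) ≤ 5. -/
lemma adj_uv {k : ℕ} (i : Fin k) : (Gk k).Adj (uVtx k) (vVtx i) := by
  simp [Gk, SimpleGraph.fromRel_adj, uVtx, vVtx, GkRel]

lemma adj_vw {k : ℕ} (i : Fin k) : (Gk k).Adj (vVtx i) (wVtx i) := by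
  simp [Gk, SimpleGraph.fromRel_adj, vVtx, wVtx, GkRel]

lemma adj_ww {k : ℕ} {i j : Fin k} (h : i ≠ j) : (Gk k).Adj (wVtx i) (wVtx j) := by
  simp [Gk, SimpleGraph.fromRel_adj, wVtx, GkRel, h]

open SimpleGraph Walk in
lemma rainbow_aux {β : Type*} {k : ℕ} (hk : 2 ≤ k) (c : Sym2 (Vk k) → β)
    (a1 a2 a3 a4 a5 : β)
    (h1 : c s(uVtx k, vVtx (⟨0, lt_of_lt_of_le (Nat.succ_pos 1) hk⟩ : Fin k)) = a1)
    (h2 : c s(vVtx (⟨0, lt_of_lt_of_le (Nat.succ_pos 1) hk⟩ : Fin k), wVtx (⟨0, lt_of_lt_of_le (Nat.succ_pos 1) hk⟩ : Fin k)) = a2)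
    (h3 : ∀ i : Fin k, i ≠ (⟨0, lt_of_lt_of_le (Nat.succ_pos 1) hk⟩ : Fin k) → c s(uVtx k, vVtx i) = a3)
    (h4 : ∀ i : Fin k, i ≠ (⟨0, lt_of_lt_of_le (Nat.succ_pos 1) hk⟩ : Fin k) → c s(vVtx i, wVtx i) = a4)
    (h5 : ∀ i j : Fin k, i ≠ j → c s(wVtx i, wVtx j) = a5)
    (hne : ([a1, a2, a3, a4, a5] : List β).Nodup) :
    RainbowConnected (Gk k) c := by
  set z : Fin k := ⟨0, by omega⟩ with hz
  simp only [List.nodup_cons, List.mem_cons, List.mem_singleton, List.not_mem_nil,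
    List.nodup_nil, or_false, not_or] at hne
  obtain ⟨⟨n12, n13, n14, n15⟩, ⟨n23, n24, n25⟩, ⟨n34, n35⟩, n45, -⟩ := hne
  have h1' : c s(vVtx z, uVtx k) = a1 := by rw [Sym2.eq_swap]; exact h1
  have h3' : ∀ i : Fin k, i ≠ z → c s(vVtx i, uVtx k) = a3 := fun i hi => by
    rw [Sym2.eq_swap]; exact h3 i hi
  have h4' : ∀ i : Fin k, i ≠ z → c s(wVtx i, vVtx i) = a4 := fun i hi => by
    rw [Sym2.eq_swap]; exact h4 i hi
  have h2' : c s(wVtx z, vVtx z) = a2 := by rw [Sym2.eq_swap]; exact h2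
  have key : ∀ x y : Vk k, x ≠ y →
      ∃ p : (Gk k).Walk x y, p.IsPath ∧ (p.edges.map c).Nodup := by
    simp only [uVtx, vVtx, wVtx] at h1 h2 h3 h4 h5 h1' h2' h3' h4'
    intro x y hxy
    have adj_uv : ∀ i : Fin k, (Gk k).Adj (Sum.inl ()) (Sum.inr (Sum.inl i)) := adj_uv
    have adj_vw : ∀ i : Fin k, (Gk k).Adj (Sum.inr (Sum.inl i)) (Sum.inr (Sum.inr i)) := adj_vw
    have adj_ww : ∀ {i j : Fin k}, i ≠ j →
      (Gk k).Adj (Sum.inr (Sum.inr i)) (Sum.inr (Sum.inr j)) := adj_ww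
    rcases x with u | i | i
    · cases u
      rcases y with u' | j | j
      · cases u'; exact absurd rfl hxy
      · exact ⟨Walk.cons (adj_uv j) Walk.nil, by
          simp [Walk.cons_isPath_iff, uVtx, vVtx], by simp⟩
      · refine ⟨Walk.cons (adj_uv j) (Walk.cons (adj_vw j) Walk.nil), ?_, ?_⟩
        · simp [Walk.cons_isPath_iff, uVtx, vVtx, wVtx]
        · by_cases hj : j = z
          · subst hj; simp [uVtx, vVtx, wVtx, h1, h2, n12]
          · simp [uVtx, vVtx, wVtx, h3 j hj, h4 j hj, n34]
    · rcases y with u' | j | j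
      · cases u'
        exact ⟨Walk.cons (adj_uv i).symm Walk.nil, by
          simp [Walk.cons_isPath_iff, uVtx, vVtx], by simp⟩
      · have hij : i ≠ j := by simpa using hxy
        by_cases hi : i = z
        · subst hi
          refine ⟨Walk.cons (adj_uv z).symm (Walk.cons (adj_uv j) Walk.nil), ?_, ?_⟩
          · simp [Walk.cons_isPath_iff, uVtx, vVtx, hij]
          · simp [uVtx, vVtx, h1', h3 j (Ne.symm hij), n13]
        · by_cases hj : j = z
          · subst hj
            refine ⟨Walk.cons (adj_uv i).symm (Walk.cons (adj_uv z) Walk.nil), ?_, ?_⟩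
            · simp [Walk.cons_isPath_iff, uVtx, vVtx, hij]
            · simp [uVtx, vVtx, h3' i hi, h1, Ne.symm n13]
          · have hzj : z ≠ j := Ne.symm hj
            have hzi : z ≠ i := Ne.symm hi
            refine ⟨Walk.cons (adj_uv i).symm (Walk.cons (adj_uv z)
              (Walk.cons (adj_vw z) (Walk.cons (adj_ww hzj)
                (Walk.cons (adj_vw j).symm Walk.nil)))), ?_, ?_⟩
            · simp [Walk.cons_isPath_iff, uVtx, vVtx, wVtx, hij, hi, hj, hzi, hzj]
            · simp [uVtx, vVtx, wVtx, h3' i hi, h1, h2, h5 z j hzj, h4' j hj,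
                n12, n13, n14, n15, n23, n24, n25, n34, n35, n45,
                Ne.symm n13, Ne.symm n34, Ne.symm n23, Ne.symm n35, Ne.symm n45,
                Ne.symm n12, Ne.symm n14, Ne.symm n15, Ne.symm n24, Ne.symm n25]
      · by_cases hij : i = j
        · subst hij
          exact ⟨Walk.cons (adj_vw i) Walk.nil, by
            simp [Walk.cons_isPath_iff, vVtx, wVtx], by simp⟩
        · refine ⟨Walk.cons (adj_vw i) (Walk.cons (adj_ww hij) Walk.nil), ?_, ?_⟩
          · simp [Walk.cons_isPath_iff, vVtx, wVtx, hij]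
          · by_cases hi : i = z
            · subst hi; simp [vVtx, wVtx, h2, h5 z j hij, n25]
            · simp [vVtx, wVtx, h4 i hi, h5 i j hij, n45]
    · rcases y with u' | j | j
      · cases u'
        refine ⟨Walk.cons (adj_vw i).symm (Walk.cons (adj_uv i).symm Walk.nil), ?_, ?_⟩
        · simp [Walk.cons_isPath_iff, uVtx, vVtx, wVtx]
        · by_cases hi : i = z
          · subst hi; simp [uVtx, vVtx, wVtx, h1', h2', Ne.symm n12]
          · simp [uVtx, vVtx, wVtx, h3' i hi, h4' i hi, Ne.symm n34]
      · by_cases hij : i = j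
        · subst hij
          exact ⟨Walk.cons (adj_vw i).symm Walk.nil, by
            simp [Walk.cons_isPath_iff, vVtx, wVtx], by simp⟩
        · refine ⟨Walk.cons (adj_ww hij) (Walk.cons (adj_vw j).symm Walk.nil), ?_, ?_⟩
          · simp [Walk.cons_isPath_iff, vVtx, wVtx, hij]
          · by_cases hj : j = z
            · subst hj; simp [vVtx, wVtx, h2', h5 i z hij, Ne.symm n25]
            · simp [vVtx, wVtx, h4' j hj, h5 i j hij, Ne.symm n45]
      · have hij : i ≠ j := by simpa using hxy
        exact ⟨Walk.cons (adj_ww hij) Walk.nil, by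
          simp [Walk.cons_isPath_iff, wVtx, hij], by simp⟩
  exact key

/-- A symmetric 5-coloring of pairs of vertices of `G_k`. -/
def fcol (k : ℕ) : Vk k → Vk k → Fin 5
  | Sum.inl _, Sum.inr (Sum.inl i) => if (i : ℕ) = 0 then 0 else 2
  | Sum.inr (Sum.inl i), Sum.inl _ => if (i : ℕ) = 0 then 0 else 2
  | Sum.inr (Sum.inl i), Sum.inr (Sum.inr _) => if (i : ℕ) = 0 then 1 else 3
  | Sum.inr (Sum.inr _), Sum.inr (Sum.inl i) => if (i : ℕ) = 0 then 1 else 3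
  | Sum.inr (Sum.inr _), Sum.inr (Sum.inr _) => 4
  | _, _ => 0

lemma fcol_symm (k : ℕ) : ∀ x y : Vk k, fcol k x y = fcol k y x := by
  rintro (x | x | x) (y | y | y) <;> rfl


/-- For every `k ≥ 2`, the edge coloring of `G_k` with 5 colors given by `c(u v_1) = 1`,
`c(v_1 w_1) = 2`, `c(u v_i) = 3` and `c(v_i w_i) = 4` for `i ≠ 1`, and `c(w_i w_j) = 5`,
makes `G_k` rainbow connected; in particular `rc(G_k) ≤ 5`. -/
theorem Gk_rainbow_connected_with_five_colors (k : ℕ) (hk : 2 ≤ k) :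
    (∀ c : Sym2 (Vk k) → ℕ,
      c s(uVtx k, vVtx (⟨0, by omega⟩ : Fin k)) = 1 →
      c s(vVtx (⟨0, by omega⟩ : Fin k), wVtx (⟨0, by omega⟩ : Fin k)) = 2 →
      (∀ i : Fin k, i ≠ (⟨0, by omega⟩ : Fin k) → c s(uVtx k, vVtx i) = 3) →
      (∀ i : Fin k, i ≠ (⟨0, by omega⟩ : Fin k) → c s(vVtx i, wVtx i) = 4) →
      (∀ i j : Fin k, i ≠ j → c s(wVtx i, wVtx j) = 5) →
      RainbowConnected (Gk k) c) ∧
    ∃ c : Sym2 (Vk k) → Fin 5, RainbowConnected (Gk k) c := by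
  constructor
  · intro c h1 h2 h3 h4 h5
    exact rainbow_aux hk c 1 2 3 4 5 h1 h2 h3 h4 h5 (by decide)
  · refine ⟨Sym2.lift ⟨fcol k, fcol_symm k⟩, ?_⟩
    apply rainbow_aux hk _ 0 1 2 3 4
    · simp [uVtx, vVtx, fcol]
    · simp [vVtx, wVtx, fcol]
    · intro i hi
      have : (i : ℕ) ≠ 0 := fun h => hi (Fin.ext h)
      simp [uVtx, vVtx, fcol, this]
    · intro i hi
      have : (i : ℕ) ≠ 0 := fun h => hi (Fin.ext h)
      simp [vVtx, wVtx, fcol, this]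
    · intro i j _
      simp [wVtx, fcol]
    · decide
end

section
/- For every integer k ≥ 17, rc(G_k) = 5: there is an edge coloring of G_k with 5 colors making it rainbow connected, but no edge coloring with 4 colors does. -/
namespace GkAux

open SimpleGraph Walk

variable {k : ℕ}

lemma adj_uv (i : Fin k) : (Gk k).Adj (uVtx k) (vVtx i) :=
  (SimpleGraph.fromRel_adj _ _ _).2 ⟨by simp [uVtx, vVtx], Or.inl trivial⟩

lemma adj_vw (i : Fin k) : (Gk k).Adj (vVtx i) (wVtx i) :=
  (SimpleGraph.fromRel_adj _ _ _).2 ⟨by simp [vVtx, wVtx], Or.inl rfl⟩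

lemma adj_ww {i j : Fin k} (h : i ≠ j) : (Gk k).Adj (wVtx i) (wVtx j) :=
  (SimpleGraph.fromRel_adj _ _ _).2 ⟨by simp [wVtx, h], Or.inl trivial⟩

lemma adj_u_iff {x : Vk k} : (Gk k).Adj (uVtx k) x ↔ ∃ i, x = vVtx i := by
  rcases x with _ | i | i <;>
    simp [Gk, SimpleGraph.fromRel_adj, GkRel, uVtx, vVtx, wVtx]

lemma adj_v_iff {i : Fin k} {x : Vk k} :
    (Gk k).Adj (vVtx i) x ↔ x = uVtx k ∨ x = wVtx i := by
  rcases x with _ | j | j <;>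
    simp [Gk, SimpleGraph.fromRel_adj, GkRel, uVtx, vVtx, wVtx, eq_comm]

lemma adj_w_iff {i : Fin k} {x : Vk k} :
    (Gk k).Adj (wVtx i) x ↔ x = vVtx i ∨ ∃ j, j ≠ i ∧ x = wVtx j := by
  rcases x with _ | j | j <;>
    simp [Gk, SimpleGraph.fromRel_adj, GkRel, uVtx, vVtx, wVtx, eq_comm, ne_comm]

end GkAux

namespace GkAux
open SimpleGraph Walk
variable {k : ℕ}

def col (k : ℕ) : Vk k → Vk k → Fin 5
  | Sum.inl _, Sum.inr (Sum.inl i) => if (i : ℕ) = 0 then 0 else 1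
  | Sum.inr (Sum.inl i), Sum.inl _ => if (i : ℕ) = 0 then 0 else 1
  | Sum.inr (Sum.inl i), Sum.inr (Sum.inr _) => if (i : ℕ) = 0 then 2 else 3
  | Sum.inr (Sum.inr _), Sum.inr (Sum.inl i) => if (i : ℕ) = 0 then 2 else 3
  | Sum.inr (Sum.inr _), Sum.inr (Sum.inr _) => 4
  | _, _ => 0

lemma col_symm (x y : Vk k) : col k x y = col k y x := by
  rcases x with _ | x | x <;> rcases y with _ | y | y <;> simp [col]

def cFive (k : ℕ) : Sym2 (Vk k) → Fin 5 := Sym2.lift ⟨col k, col_symm⟩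

@[simp] lemma cFive_mk (x y : Vk k) : cFive k s(x, y) = col k x y :=
  Sym2.lift_mk _ _ _

@[simp] lemma finv0 [NeZero k] (i : Fin k) : (i : ℕ) = 0 ↔ i = 0 :=
  ⟨fun h => Fin.ext (by simp [h]), fun h => by simp [h]⟩

@[simp] lemma col_uv [NeZero k] (i : Fin k) :
    col k (uVtx k) (vVtx i) = if i = 0 then 0 else 1 := by simp [col, uVtx, vVtx, finv0]
@[simp] lemma col_vu [NeZero k] (i : Fin k) :
    col k (vVtx i) (uVtx k) = if i = 0 then 0 else 1 := by simp [col, uVtx, vVtx, finv0]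
@[simp] lemma col_vw [NeZero k] (i j : Fin k) :
    col k (vVtx i) (wVtx j) = if i = 0 then 2 else 3 := by simp [col, vVtx, wVtx, finv0]
@[simp] lemma col_wv [NeZero k] (i j : Fin k) :
    col k (wVtx i) (vVtx j) = if j = 0 then 2 else 3 := by simp [col, vVtx, wVtx, finv0]
@[simp] lemma col_ww (i j : Fin k) : col k (wVtx i) (wVtx j) = 4 := by simp [col, wVtx]

lemma rp_symm {β : Type*} {G : SimpleGraph (Vk k)} {c : Sym2 (Vk k) → β} {x y : Vk k}
    (h : ∃ p : G.Walk x y, p.IsPath ∧ (p.edges.map c).Nodup) :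
    ∃ p : G.Walk y x, p.IsPath ∧ (p.edges.map c).Nodup := by
  obtain ⟨p, hp, hc⟩ := h
  exact ⟨p.reverse, hp.reverse, by
    rw [SimpleGraph.Walk.edges_reverse, List.map_reverse, List.nodup_reverse]; exact hc⟩

lemma exists_five_coloring (hk : 0 < k) : RainbowConnected (Gk k) (cFive k) := by
  haveI : NeZero k := ⟨by omega⟩
  have Luv : ∀ i : Fin k, ∃ p : (Gk k).Walk (uVtx k) (vVtx i),
      p.IsPath ∧ (p.edges.map (cFive k)).Nodup := fun i =>
    ⟨cons (adj_uv i) nil, by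
      constructor
      · simp only [Walk.cons_isPath_iff, Walk.support_cons, Walk.support_nil]; simp [Walk.cons_isPath_iff, uVtx, vVtx]
      · simp⟩
  have Luw : ∀ i : Fin k, ∃ p : (Gk k).Walk (uVtx k) (wVtx i),
      p.IsPath ∧ (p.edges.map (cFive k)).Nodup := fun i =>
    ⟨cons (adj_uv i) (cons (adj_vw i) nil), by
      constructor
      · simp only [Walk.cons_isPath_iff, Walk.support_cons, Walk.support_nil]; simp [Walk.cons_isPath_iff, uVtx, vVtx, wVtx]
      · by_cases hi : i = 0 <;> simp [hi]⟩
  have Lvw : ∀ i j : Fin k, ∃ p : (Gk k).Walk (vVtx i) (wVtx j),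
      p.IsPath ∧ (p.edges.map (cFive k)).Nodup := by
    intro i j
    by_cases hij : i = j
    · subst hij
      exact ⟨cons (adj_vw i) nil, by
        constructor
        · simp only [Walk.cons_isPath_iff, Walk.support_cons, Walk.support_nil]; simp [Walk.cons_isPath_iff, vVtx, wVtx]
        · simp⟩
    · refine ⟨cons (adj_vw i) (cons (adj_ww hij) nil), ?_, ?_⟩
      · simp only [Walk.cons_isPath_iff, Walk.support_cons, Walk.support_nil]; simp [Walk.cons_isPath_iff, vVtx, wVtx, hij]
      · by_cases hi : i = 0 <;> simp [hi]
  have Lww : ∀ i j : Fin k, i ≠ j → ∃ p : (Gk k).Walk (wVtx i) (wVtx j),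
      p.IsPath ∧ (p.edges.map (cFive k)).Nodup := by
    intro i j hij
    exact ⟨cons (adj_ww hij) nil, by
      constructor
      · simp only [Walk.cons_isPath_iff, Walk.support_cons, Walk.support_nil]; simp [Walk.cons_isPath_iff, wVtx, hij]
      · simp⟩
  have Lvv : ∀ i j : Fin k, i ≠ j → ∃ p : (Gk k).Walk (vVtx i) (vVtx j),
      p.IsPath ∧ (p.edges.map (cFive k)).Nodup := by
    have key : ∀ i j : Fin k, i ≠ j → i = 0 → ∃ p : (Gk k).Walk (vVtx i) (vVtx j),
        p.IsPath ∧ (p.edges.map (cFive k)).Nodup := by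
      intro i j hij hi
      subst hi
      refine ⟨cons (adj_vw 0) (cons (adj_ww hij) (cons (adj_vw j).symm nil)), ?_, ?_⟩
      · simp only [Walk.cons_isPath_iff, Walk.support_cons, Walk.support_nil]; simp [Walk.cons_isPath_iff, vVtx, wVtx, hij, hij.symm]
      · have hj : j ≠ 0 := fun h => hij h.symm
        simp [hj]
    intro i j hij
    by_cases hi : i = 0
    · exact key i j hij hi
    by_cases hj : j = 0
    · exact rp_symm (key j i (Ne.symm hij) hj)
    -- both nonzero : v_i u v_0 w_0 w_j v_j
    have h0i : (0 : Fin k) ≠ i := fun h => hi h.symm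
    have h0j : (0 : Fin k) ≠ j := fun h => hj h.symm
    refine ⟨cons (adj_uv i).symm (cons (adj_uv 0) (cons (adj_vw 0)
      (cons (adj_ww h0j) (cons (adj_vw j).symm nil)))), ?_, ?_⟩
    · simp only [Walk.cons_isPath_iff, Walk.support_cons, Walk.support_nil]; simp [Walk.cons_isPath_iff, uVtx, vVtx, wVtx, hij, hi, hj, h0i, h0j,
        Ne.symm hij, Ne.symm h0i, Ne.symm h0j]
    · simp [hi, hj]
  intro x y hxy
  rcases x with _ | i | i <;> rcases y with _ | j | j
  · exact absurd rfl hxy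
  · exact Luv j
  · exact Luw j
  · exact rp_symm (Luv i)
  · refine Lvv i j (fun h => hxy ?_); rw [h]
  · exact Lvw i j
  · exact rp_symm (Luw i)
  · exact rp_symm (Lvw j i)
  · refine Lww i j (fun h => hxy ?_); rw [h]


open SimpleGraph Walk
variable {k : ℕ}

lemma ne_vv {i j : Fin k} (hij : i ≠ j) : vVtx i ≠ vVtx (k := k) j := by
  simp [vVtx, hij]

lemma cswap {β : Type*} (c : Sym2 (Vk k) → β) (x y : Vk k) : c s(x, y) = c s(y, x) := by
  rw [Sym2.eq_swap]

lemma no_rainbow_path {c : Sym2 (Vk k) → Fin 4} {i j : Fin k} (hij : i ≠ j)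
    (h1 : c s(uVtx k, vVtx i) = c s(uVtx k, vVtx j))
    (h2 : c s(vVtx i, wVtx i) = c s(vVtx j, wVtx j))
    (p : (Gk k).Walk (vVtx i) (vVtx j)) (hp : p.IsPath) :
    ¬ (p.edges.map c).Nodup := by
  intro hnd
  have hlen : p.length ≤ 4 := by
    have h := hnd.length_le_card
    simpa [Walk.length_edges] using h
  -- first step
  obtain ⟨x1, ha1, q1, rfl⟩ := Walk.exists_eq_cons_of_ne (ne_vv hij) p
  rcases (adj_v_iff.1 ha1) with rfl | rfl
  · -- first vertex u
    have hq1 : q1.IsPath ∧ vVtx i ∉ q1.support := by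
      simpa [Walk.cons_isPath_iff] using hp
    have hne1 : uVtx k ≠ vVtx (k := k) j := by simp [uVtx, vVtx]
    obtain ⟨x2, ha2, q2, rfl⟩ := Walk.exists_eq_cons_of_ne hne1 q1
    obtain ⟨l, rfl⟩ := adj_u_iff.1 ha2
    have hq2 : q2.IsPath ∧ uVtx k ∉ q2.support := by
      have := hq1.1
      simpa [Walk.cons_isPath_iff] using this
    by_cases hlj : l = j
    · subst hlj
      have : q2 = Walk.nil := Walk.isPath_iff_eq_nil.1 hq2.1
      subst this
      simp only [Walk.edges_cons, Walk.edges_nil, List.map_cons, List.map_nil,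
        List.nodup_cons] at hnd
      have h1' := (cswap c (vVtx i) (uVtx k)).trans h1
      exact hnd.1 (by simp [h1'])
    · -- l ≠ j
      obtain ⟨x3, ha3, q3, rfl⟩ := Walk.exists_eq_cons_of_ne (ne_vv hlj) q2
      rcases (adj_v_iff.1 ha3) with rfl | rfl
      · exact hq2.2 (by simp [Walk.support_cons])
      · -- x3 = w_l, q3 : Walk (wVtx l) (vVtx j)
        have hne3 : wVtx l ≠ vVtx (k := k) j := by simp [wVtx, vVtx]
        obtain ⟨x4, ha4, q4, rfl⟩ := Walk.exists_eq_cons_of_ne hne3 q3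
        cases q4 with
        | nil =>
          rcases (adj_w_iff.1 ha4) with h | ⟨m, hm, h⟩
          · exact hlj (by simpa [vVtx] using h.symm)
          · simp [vVtx, wVtx] at h
        | cons ha5 q5 =>
          simp [Walk.length_cons] at hlen; omega
  · -- first vertex w_i
    have hq1 : q1.IsPath ∧ vVtx i ∉ q1.support := by
      simpa [Walk.cons_isPath_iff] using hp
    have hne1 : wVtx i ≠ vVtx (k := k) j := by simp [uVtx, vVtx, wVtx]
    obtain ⟨x2, ha2, q2, rfl⟩ := Walk.exists_eq_cons_of_ne hne1 q1
    rcases (adj_w_iff.1 ha2) with rfl | ⟨l, hli, rfl⟩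
    · exact hq1.2 (by simp [Walk.support_cons])
    · -- second vertex w_l
      have hq2 : q2.IsPath := by
        have := hq1.1
        simp [Walk.cons_isPath_iff] at this
        exact this.1
      have hne2 : wVtx l ≠ vVtx (k := k) j := by simp [wVtx, vVtx]
      obtain ⟨x3, ha3, q3, rfl⟩ := Walk.exists_eq_cons_of_ne hne2 q2
      rcases (adj_w_iff.1 ha3) with rfl | ⟨m, hml, rfl⟩
      · -- x3 = v_l
        by_cases hlj : l = j
        · subst hlj
          have h3nil : q3 = Walk.nil := by
            have := hq2
            simp [Walk.cons_isPath_iff, Walk.isPath_iff_eq_nil] at this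
            exact Walk.nil_iff_eq_nil.1 this.1
          subst h3nil
          -- p = v_i w_i w_j v_j
          simp only [Walk.edges_cons, Walk.edges_nil, List.map_cons, List.map_nil,
            List.nodup_cons] at hnd
          have h2' := h2.trans (cswap c _ _)
          exact hnd.1 (by simp [h2'])
        · obtain ⟨x4, ha4, q4, rfl⟩ := Walk.exists_eq_cons_of_ne (ne_vv hlj) q3
          cases q4 with
          | nil =>
            rcases (adj_v_iff.1 ha4) with h | h
            · simp [uVtx, vVtx] at h
            · simp [wVtx, vVtx] at h
          | cons ha5 q5 =>
            simp [Walk.length_cons] at hlen; omega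
      · -- x3 = w_m
        have hne3 : wVtx m ≠ vVtx (k := k) j := by simp [wVtx, vVtx]
        obtain ⟨x4, ha4, q4, rfl⟩ := Walk.exists_eq_cons_of_ne hne3 q3
        cases q4 with
        | nil =>
          -- p = v_i w_i w_l w_m v_j with Adj w_m v_j
          simp only [Walk.edges_cons, Walk.edges_nil, List.map_cons, List.map_nil,
            List.nodup_cons] at hnd
          rcases (adj_w_iff.1 ha4) with h | ⟨n, hn, h⟩
          · have hmj : m = j := by simpa [vVtx] using h.symm
            subst hmj
            have h2' := h2.trans (cswap c _ _)
            exact hnd.1 (by simp [h2'])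
          · simp [vVtx, wVtx] at h
        | cons ha5 q5 =>
          simp [Walk.length_cons] at hlen; omega

lemma no_four_coloring (hk : 17 ≤ k) (c : Sym2 (Vk k) → Fin 4) :
    ¬ RainbowConnected (Gk k) c := by
  intro hrc
  obtain ⟨a, -, ha⟩ := Finset.exists_lt_card_fiber_of_mul_lt_card_of_maps_to
    (s := (Finset.univ : Finset (Fin k))) (t := (Finset.univ : Finset (Fin 4)))
    (f := fun i => c s(uVtx k, vVtx i)) (n := 4) (fun x _ => Finset.mem_univ _)
    (by simp; omega)
  set S := Finset.univ.filter (fun i : Fin k => c s(uVtx k, vVtx i) = a) with hS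
  obtain ⟨i, hiS, j, hjS, hij, hcij⟩ :=
    Finset.exists_ne_map_eq_of_card_lt_of_maps_to
      (s := S) (t := (Finset.univ : Finset (Fin 4)))
      (by simpa using ha) (f := fun i => c s(vVtx i, wVtx i)) (fun x _ => Finset.mem_univ _)
  simp only [hS, Finset.mem_filter] at hiS hjS
  obtain ⟨p, hp, hnd⟩ := hrc (vVtx i) (vVtx j) (ne_vv hij)
  exact no_rainbow_path hij (hiS.2.trans hjS.2.symm) hcij p hp hnd

end GkAux

/-- For every integer `k ≥ 17`, `rc(G_k) = 5`: some edge coloring of `G_k` with 5 colors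
makes it rainbow connected, but no edge coloring with 4 colors does. -/
theorem Gk_rc_eq_five (k : ℕ) (hk : 17 ≤ k) :
    (∃ c : Sym2 (Vk k) → Fin 5, RainbowConnected (Gk k) c) ∧
    (∀ c : Sym2 (Vk k) → Fin 4, ¬ RainbowConnected (Gk k) c) :=
  ⟨⟨GkAux.cFive k, GkAux.exists_five_coloring (by omega)⟩,
    fun c => GkAux.no_four_coloring hk c⟩
end

section
/- There exists a connected bridgeless simple graph G of diameter 2 with rc(G) = 5; hence the upper bound rc(G) ≤ 5 for connected bridgeless graphs of diameter 2 is sharp. -/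
namespace RC5

inductive V : Type
  | hub : V
  | a : Fin 17 → V
  | b : Fin 17 → V
  deriving DecidableEq, Fintype

open V

def adjB : V → V → Bool
  | hub, a _ => true
  | a _, hub => true
  | a i, b j => i = j
  | b i, a j => i = j
  | b i, b j => i != j
  | _, _ => false

def G : SimpleGraph V where
  Adj x y := adjB x y = true
  symm := by
    have h : ∀ x y, adjB x y = true → adjB y x = true := by decide
    exact ⟨fun x y hxy => h x y hxy⟩
  loopless := by
    have h : ∀ x, ¬ adjB x x = true := by decide
    exact ⟨fun x => h x⟩

instance : DecidableRel G.Adj := fun _ _ => inferInstanceAs (Decidable (_ = true))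

lemma adj_def {x y : V} : G.Adj x y ↔ adjB x y = true := Iff.rfl

lemma adj_hub_a (i : Fin 17) : G.Adj hub (a i) := by simp [adj_def, adjB]
lemma adj_a_hub (i : Fin 17) : G.Adj (a i) hub := by simp [adj_def, adjB]
lemma adj_a_b (i : Fin 17) : G.Adj (a i) (b i) := by simp [adj_def, adjB]
lemma adj_b_a (i : Fin 17) : G.Adj (b i) (a i) := by simp [adj_def, adjB]
lemma adj_b_b {i j : Fin 17} (h : i ≠ j) : G.Adj (b i) (b j) := by
  simp [adj_def, adjB, bne_iff_ne, h]

lemma adj_hub_iff {y : V} : G.Adj hub y ↔ ∃ k, y = a k := by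
  cases y <;> simp [adj_def, adjB]

lemma adj_a_iff {i : Fin 17} {y : V} : G.Adj (a i) y ↔ y = hub ∨ y = b i := by
  cases y <;> simp [adj_def, adjB, eq_comm]

lemma adj_b_iff {i : Fin 17} {y : V} : G.Adj (b i) y ↔ y = a i ∨ ∃ l, l ≠ i ∧ y = b l := by
  cases y with
  | hub => simp [adj_def, adjB]
  | a j => simp [adj_def, adjB, eq_comm]
  | b j =>
    simp only [adj_def, adjB, bne_iff_ne]
    constructor
    · intro h; exact Or.inr ⟨j, Ne.symm h, rfl⟩
    · rintro (h | ⟨l, hl, he⟩)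
      · exact absurd h (by simp)
      · cases he; exact fun hij => hl (hij ▸ rfl)

instance : Nonempty V := ⟨hub⟩

open SimpleGraph Walk

lemma exists_short_walk (x y : V) : ∃ p : G.Walk x y, p.length ≤ 2 := by
  cases x with
  | hub =>
    cases y with
    | hub => exact ⟨Walk.nil, by simp⟩
    | a i => exact ⟨Walk.cons (adj_hub_a i) Walk.nil, by simp⟩
    | b i => exact ⟨Walk.cons (adj_hub_a i) (Walk.cons (adj_a_b i) Walk.nil), by simp⟩
  | a i =>
    cases y with
    | hub => exact ⟨Walk.cons (adj_a_hub i) Walk.nil, by simp⟩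
    | a j =>
      by_cases h : i = j
      · subst h; exact ⟨Walk.nil, by simp⟩
      · exact ⟨Walk.cons (adj_a_hub i) (Walk.cons (adj_hub_a j) Walk.nil), by simp⟩
    | b j =>
      by_cases h : i = j
      · subst h; exact ⟨Walk.cons (adj_a_b i) Walk.nil, by simp⟩
      · exact ⟨Walk.cons (adj_a_b i) (Walk.cons (adj_b_b h) Walk.nil), by simp⟩
  | b i =>
    cases y with
    | hub => exact ⟨Walk.cons (adj_b_a i) (Walk.cons (adj_a_hub i) Walk.nil), by simp⟩
    | a j =>
      by_cases h : i = j
      · subst h; exact ⟨Walk.cons (adj_b_a i) Walk.nil, by simp⟩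
      · exact ⟨Walk.cons (adj_b_b (fun hh => h hh)) (Walk.cons (adj_b_a j) Walk.nil), by simp⟩
    | b j =>
      by_cases h : i = j
      · subst h; exact ⟨Walk.nil, by simp⟩
      · exact ⟨Walk.cons (adj_b_b h) Walk.nil, by simp⟩

lemma G_connected : G.Connected :=
  ⟨fun x y => (exists_short_walk x y).elim fun p _ => ⟨p⟩⟩

lemma G_ediam : G.ediam = 2 := by
  apply le_antisymm
  · refine SimpleGraph.ediam_le_of_edist_le fun u v => ?_
    obtain ⟨p, hp⟩ := exists_short_walk u v
    exact le_trans (SimpleGraph.edist_le p) (by exact_mod_cast hp)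
  · have h1 : G.edist hub (b 0) ≠ 1 := by
      intro h
      exact absurd (SimpleGraph.edist_eq_one_iff_adj.mp h) (by simp [adj_def, adjB])
    have hpos : 0 < G.edist hub (b 0) := G.edist_pos_of_ne (by simp)
    have hlt : 1 < G.edist hub (b 0) :=
      lt_of_le_of_ne (Order.one_le_iff_pos.mpr hpos) (Ne.symm h1)
    calc (2 : ℕ∞) = 1 + 1 := by norm_num
    _ ≤ G.edist hub (b 0) := Order.add_one_le_of_lt hlt
    _ ≤ G.ediam := SimpleGraph.edist_le_ediam

lemma G_diam : G.diam = 2 := by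
  rw [SimpleGraph.diam, G_ediam]; rfl

lemma not_bridge : ∀ e : Sym2 V, ¬ G.IsBridge e := by
  intro e
  induction e with
  | _ x y =>
    rw [SimpleGraph.isBridge_iff_forall_walk_mem_edges]
    intro hall
    have hadj : G.Adj x y := Walk.adj_of_mem_edges _ (hall (G_connected.preconnected x y).some)
    have third : ∀ i j : Fin 17, ∃ k : Fin 17, k ≠ i ∧ k ≠ j := by decide
    cases x with
    | hub =>
      obtain ⟨i, rfl⟩ := adj_hub_iff.mp hadj
      obtain ⟨k, hk, -⟩ := third i i
      have := hall (Walk.cons (adj_hub_a k) (Walk.cons (adj_a_b k)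
        (Walk.cons (adj_b_b (fun h => hk h)) (Walk.cons (adj_b_a i) Walk.nil))))
      simp [Sym2.eq_iff, hk, Ne.symm hk] at this
    | a i =>
      rcases adj_a_iff.mp hadj with rfl | rfl
      · obtain ⟨k, hk, -⟩ := third i i
        have := hall (Walk.cons (adj_a_b i) (Walk.cons (adj_b_b (fun h => hk h.symm))
          (Walk.cons (adj_b_a k) (Walk.cons (adj_a_hub k) Walk.nil))))
        simp [Sym2.eq_iff, hk, Ne.symm hk] at this
      · obtain ⟨k, hk, -⟩ := third i i
        have := hall (Walk.cons (adj_a_hub i) (Walk.cons (adj_hub_a k)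
          (Walk.cons (adj_a_b k) (Walk.cons (adj_b_b (fun h => hk h)) Walk.nil))))
        simp [Sym2.eq_iff, hk, Ne.symm hk] at this
    | b i =>
      rcases adj_b_iff.mp hadj with rfl | ⟨l, hl, rfl⟩
      · obtain ⟨k, hk, -⟩ := third i i
        have := hall (Walk.cons (adj_b_b (fun h => hk h.symm)) (Walk.cons (adj_b_a k)
          (Walk.cons (adj_a_hub k) (Walk.cons (adj_hub_a i) Walk.nil))))
        simp [Sym2.eq_iff, hk, Ne.symm hk] at this
      · obtain ⟨k, hk1, hk2⟩ := third i l
        have := hall (Walk.cons (adj_b_b (fun h => hk1 h.symm))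
          (Walk.cons (adj_b_b (fun h => hk2 h)) Walk.nil))
        simp [Sym2.eq_iff, hk1, hk2, Ne.symm hk1, Ne.symm hk2] at this


/-! ### Upper bound: a rainbow 5-coloring -/

def A5 : Fin 17 → Fin 5 := fun i =>
  if h : i.val < 12 then ⟨i.val / 3, by omega⟩
  else if h2 : i.val < 16 then 4 else 0

def B5 : Fin 17 → Fin 5 := fun i =>
  if h : i.val < 12 then ⟨(i.val / 3 + i.val % 3 + 1) % 4, by omega⟩
  else if h2 : i.val < 16 then ⟨i.val - 12, by omega⟩ else 0

def f5 : V → V → Fin 5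
  | hub, a i => A5 i
  | a i, hub => A5 i
  | a i, b _ => B5 i
  | b _, a i => B5 i
  | b _, b _ => 4
  | _, _ => 0

def c5 : Sym2 V → Fin 5 := Sym2.lift ⟨f5, by decide⟩

lemma c5_hub_a (i : Fin 17) : c5 s(hub, a i) = A5 i := rfl
lemma c5_a_hub (i : Fin 17) : c5 s(a i, hub) = A5 i := rfl
lemma c5_a_b (i j : Fin 17) : c5 s(a i, b j) = B5 i := rfl
lemma c5_b_a (i j : Fin 17) : c5 s(b j, a i) = B5 i := rfl
lemma c5_b_b (i j : Fin 17) : c5 s(b i, b j) = 4 := rfl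

lemma L1 : ∀ i j : Fin 17, i ≠ j → A5 i = A5 j → B5 i ≠ B5 j := by decide
lemma L2 : ∀ i : Fin 17, B5 i ≠ 4 := by decide
lemma L3 : ∀ i : Fin 17, A5 i = B5 i → i ≠ 0 := by decide
lemma L4 : A5 0 = 0 ∧ B5 0 = 1 := by decide

lemma upper : RainbowConnected G c5 := by
  intro x y hxy
  cases x with
  | hub =>
    cases y with
    | hub => exact absurd rfl hxy
    | a i => exact ⟨Walk.cons (adj_hub_a i) Walk.nil, by simp, by simp⟩
    | b i =>
      by_cases h : A5 i = B5 i
      · have hi0 : i ≠ 0 := L3 i h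
        refine ⟨Walk.cons (adj_hub_a 0) (Walk.cons (adj_a_b 0)
          (Walk.cons (adj_b_b (fun hh => hi0 hh.symm)) Walk.nil)), ?_, ?_⟩
        · simp [Walk.cons_isPath_iff, hi0, Ne.symm hi0]
        · simp [c5_hub_a, c5_a_b, c5_b_b, L4.1, L4.2]
      · exact ⟨Walk.cons (adj_hub_a i) (Walk.cons (adj_a_b i) Walk.nil),
          by simp [Walk.cons_isPath_iff], by simp [c5_hub_a, c5_a_b, h]⟩
  | a i =>
    cases y with
    | hub => exact ⟨Walk.cons (adj_a_hub i) Walk.nil, by simp, by simp⟩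
    | a j =>
      have hij : i ≠ j := fun h => hxy (h ▸ rfl)
      by_cases h : A5 i = A5 j
      · have hB : B5 i ≠ B5 j := L1 i j hij h
        refine ⟨Walk.cons (adj_a_b i) (Walk.cons (adj_b_b hij)
          (Walk.cons (adj_b_a j) Walk.nil)), ?_, ?_⟩
        · simp [Walk.cons_isPath_iff, hij, Ne.symm hij]
        · simp [c5_a_b, c5_b_b, c5_b_a, hB, L2 i, L2 j, Ne.symm (L2 j)]
      · exact ⟨Walk.cons (adj_a_hub i) (Walk.cons (adj_hub_a j) Walk.nil),
          by simp [Walk.cons_isPath_iff, hij], by simp [c5_a_hub, c5_hub_a, h]⟩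
    | b j =>
      by_cases h : i = j
      · subst h; exact ⟨Walk.cons (adj_a_b i) Walk.nil, by simp, by simp⟩
      · exact ⟨Walk.cons (adj_a_b i) (Walk.cons (adj_b_b h) Walk.nil),
          by simp [Walk.cons_isPath_iff, h], by simp [c5_a_b, c5_b_b, L2 i]⟩
  | b i =>
    cases y with
    | hub =>
      by_cases h : A5 i = B5 i
      · have hi0 : i ≠ 0 := L3 i h
        refine ⟨Walk.cons (adj_b_b hi0) (Walk.cons (adj_b_a 0)
          (Walk.cons (adj_a_hub 0) Walk.nil)), ?_, ?_⟩
        · simp [Walk.cons_isPath_iff, hi0, Ne.symm hi0]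
        · simp [c5_b_b, c5_b_a, c5_a_hub, L4.1, L4.2]
      · exact ⟨Walk.cons (adj_b_a i) (Walk.cons (adj_a_hub i) Walk.nil),
          by simp [Walk.cons_isPath_iff], by simp [c5_b_a, c5_a_hub]; exact fun hh => h hh.symm⟩
    | a j =>
      by_cases h : i = j
      · subst h; exact ⟨Walk.cons (adj_b_a i) Walk.nil, by simp, by simp⟩
      · exact ⟨Walk.cons (adj_b_b (fun hh => h hh)) (Walk.cons (adj_b_a j) Walk.nil),
          by simp [Walk.cons_isPath_iff, h], by simp [c5_b_b, c5_b_a]; exact Ne.symm (L2 j)⟩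
    | b j =>
      have hij : i ≠ j := fun h => hxy (h ▸ rfl)
      exact ⟨Walk.cons (adj_b_b hij) Walk.nil, by simp [hij], by simp⟩

/-! ### Lower bound: no rainbow 4-coloring -/

lemma no_rainbow_path (c : Sym2 V → Fin 4) {i j : Fin 17} (hij : i ≠ j)
    (h1 : c s(hub, a i) = c s(hub, a j)) (h2 : c s(a i, b i) = c s(a j, b j)) :
    ¬ ∃ p : G.Walk (a i) (a j), p.IsPath ∧ (p.edges.map c).Nodup := by
  rintro ⟨p, hp, hnd⟩
  have hlen : p.length ≤ 4 := by
    have h := hnd.length_le_card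
    simpa [Walk.length_edges] using h
  obtain ⟨x, hx, p1, rfl⟩ := Walk.exists_eq_cons_of_ne (by simp [hij]) p
  rcases adj_a_iff.mp hx with rfl | rfl
  · -- first step to hub
    obtain ⟨y, hy, p2, rfl⟩ := Walk.exists_eq_cons_of_ne (by simp) p1
    obtain ⟨k, rfl⟩ := adj_hub_iff.mp hy
    by_cases hkj : k = j
    · subst hkj
      have hp2 : p2.IsPath := hp.of_cons.of_cons
      rw [Walk.isPath_iff_eq_nil] at hp2
      subst hp2
      simp only [Walk.edges_cons, Walk.edges_nil, List.map_cons, List.map_nil,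
        List.nodup_cons, List.mem_cons, List.mem_singleton] at hnd
      apply hnd.1
      left
      rw [show s(a i, hub) = s(hub, a i) from Sym2.eq_swap]
      exact h1
    · obtain ⟨z, hz, p3, rfl⟩ := Walk.exists_eq_cons_of_ne (by simp [hkj]) p2
      rcases adj_a_iff.mp hz with rfl | rfl
      · -- back to hub : not a path
        simp [Walk.cons_isPath_iff] at hp
      · -- to b k, then forced one more step to a j within length budget
        obtain ⟨t, ht, p4, rfl⟩ := Walk.exists_eq_cons_of_ne (by simp) p3
        simp only [Walk.length_cons] at hlen
        have ht0 : t = a j := Walk.eq_of_length_eq_zero (p := p4) (by omega)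
        subst ht0
        rcases adj_b_iff.mp ht with h' | ⟨l, hl, h'⟩
        · exact hkj (by injection h' with h''; exact h''.symm)
        · simp at h'
  · -- first step to b i
    obtain ⟨y, hy, p2, rfl⟩ := Walk.exists_eq_cons_of_ne (by simp) p1
    rcases adj_b_iff.mp hy with rfl | ⟨l, hl, rfl⟩
    · -- back to a i : not a path
      simp [Walk.cons_isPath_iff] at hp
    · obtain ⟨z, hz, p3, rfl⟩ := Walk.exists_eq_cons_of_ne (by simp) p2
      rcases adj_b_iff.mp hz with rfl | ⟨m, hm, rfl⟩
      · -- to a l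
        by_cases hlj : l = j
        · subst hlj
          have hp3 : p3.IsPath := hp.of_cons.of_cons.of_cons
          rw [Walk.isPath_iff_eq_nil] at hp3
          subst hp3
          simp only [Walk.edges_cons, Walk.edges_nil, List.map_cons, List.map_nil,
            List.nodup_cons, List.mem_cons, List.mem_singleton] at hnd
          have hcontra : c s(a i, b i) = c s(b l, a l) := h2.trans (by rw [Sym2.eq_swap])
          tauto
        · obtain ⟨t, ht, p4, rfl⟩ := Walk.exists_eq_cons_of_ne (by simp [hlj]) p3
          simp only [Walk.length_cons] at hlen
          have ht0 : t = a j := Walk.eq_of_length_eq_zero (p := p4) (by omega)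
          subst ht0
          rcases adj_a_iff.mp ht with h' | h' <;> simp at h'
      · -- to b m, then forced one more step to a j
        obtain ⟨t, ht, p4, rfl⟩ := Walk.exists_eq_cons_of_ne (by simp) p3
        simp only [Walk.length_cons] at hlen
        have ht0 : t = a j := Walk.eq_of_length_eq_zero (p := p4) (by omega)
        subst ht0
        rcases adj_b_iff.mp ht with h' | ⟨n, hn, h'⟩
        · -- a j = a m, so m = j : rainbow fails on first/last edge
          have hmj : m = j := by injection h' with h''; exact h''.symm
          subst hmj
          simp only [Walk.edges_cons, List.map_cons, List.nodup_cons, List.mem_cons] at hnd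
          have hcontra : c s(a i, b i) = c s(b m, a m) := h2.trans (by rw [Sym2.eq_swap])
          tauto
        · simp at h'

lemma lower (c : Sym2 V → Fin 4) : ¬ RainbowConnected G c := by
  intro h
  obtain ⟨i, j, hij, hT⟩ := Fintype.exists_ne_map_eq_of_card_lt
    (fun i : Fin 17 => (c s(hub, a i), c s(a i, b i))) (by simp)
  have h1 : c s(hub, a i) = c s(hub, a j) := congrArg Prod.fst hT
  have h2 : c s(a i, b i) = c s(a j, b j) := congrArg Prod.snd hT
  exact no_rainbow_path c hij h1 h2 (h (a i) (a j) (by simp [hij]))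

end RC5

/-- There exists a connected bridgeless finite simple graph of diameter 2 with `rc(G) = 5`:
it is rainbow connectable with 5 colors but not with 4. Hence the upper bound `rc(G) ≤ 5`
for connected bridgeless graphs of diameter 2 is sharp. -/
theorem exists_diam_two_bridgeless_rc_eq_five :
    ∃ (α : Type) (_ : Fintype α) (G : SimpleGraph α),
      G.Connected ∧ (∀ e : Sym2 α, ¬ G.IsBridge e) ∧ G.diam = 2 ∧
      (∃ c : Sym2 α → Fin 5, RainbowConnected G c) ∧
      (∀ c : Sym2 α → Fin 4, ¬ RainbowConnected G c) := by
  exact ⟨RC5.V, inferInstance, RC5.G, RC5.G_connected, RC5.not_bridge, RC5.G_diam,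
    ⟨RC5.c5, RC5.upper⟩, RC5.lower⟩
end

section
/- Let G be a connected bridgeless simple graph and let u be a vertex of G whose eccentricity is at most 2. Then every edge of G incident to u lies on a cycle of length at most 5. -/
private lemma split_one {α : Type*} {H : SimpleGraph α} {x y : α} (p : H.Walk x y)
    (h : 1 ≤ p.length) : ∃ (a : α) (_ : H.Adj x a) (q : H.Walk a y),
      q.length + 1 = p.length := by
  cases p with
  | nil => simp at h
  | cons ha q => exact ⟨_, ha, q, by simp⟩

/-- Let `G` be a connected bridgeless finite simple graph and let `u` be a vertex of
eccentricity at most 2. Then every edge of `G` incident to `u` lies on a cycle of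
length at most 5. -/
theorem edge_at_center_on_short_cycle {α : Type*} [Fintype α] (G : SimpleGraph α)
    (hconn : G.Connected) (hbridgeless : ∀ e : Sym2 α, ¬ G.IsBridge e)
    (u : α) (hecc : ∀ x : α, G.dist u x ≤ 2) :
    ∀ v : α, G.Adj u v →
      ∃ (a : α) (p : G.Walk a a), p.IsCycle ∧ s(u, v) ∈ p.edges ∧ p.length ≤ 5 := by
  intro v huv
  have hne : u ≠ v := huv.ne
  set G' : SimpleGraph α := G \ SimpleGraph.fromEdgeSet {s(u,v)} with hG'
  have hG'le : G' ≤ G := sdiff_le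
  have hreach : G'.Reachable u v := by
    have hb := hbridgeless s(u, v)
    rw [SimpleGraph.isBridge_iff] at hb
    push_neg at hb
    exact hb
  have hedge : ∀ x y : α, G.Adj x y → ¬ (s(x,y) = s(u,v)) → G'.Adj x y := by
    intro x y h hxy
    rw [hG']
    simp only [SimpleGraph.sdiff_adj, SimpleGraph.fromEdgeSet_adj, Set.mem_singleton_iff]
    exact ⟨h, fun hc => hxy hc.1⟩
  have hmemG' : ∀ e : Sym2 α, e ∈ G.edgeSet → e ≠ s(u,v) → e ∈ G'.edgeSet := by
    intro e he hne'
    rw [hG']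
    simp only [SimpleGraph.edgeSet_sdiff, Set.mem_diff, SimpleGraph.edgeSet_fromEdgeSet,
      Set.mem_diff, Set.mem_singleton_iff]
    exact ⟨he, fun hc => hne' hc.1⟩
  have hdist4 : G'.dist u v ≤ 4 := by
    by_contra hgt
    push_neg at hgt
    obtain ⟨p, hplen⟩ := hreach.exists_walk_length_eq_dist
    have hp5 : 5 ≤ p.length := by omega
    obtain ⟨a, h1, p1, hl1⟩ := split_one p (by omega)
    obtain ⟨b, h2, p2, hl2⟩ := split_one p1 (by omega)
    obtain ⟨c, h3, q, hl3⟩ := split_one p2 (by omega)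
    have hq2 : 2 ≤ q.length := by omega
    -- the prefix walk of length 3 from u to c
    let t : G'.Walk u c := .cons h1 (.cons h2 (.cons h3 .nil))
    have ht3 : t.length = 3 := rfl
    have hcu : c ≠ u := by
      rintro rfl
      have := G'.dist_le q
      omega
    have hcv : c ≠ v := by
      rintro rfl
      have := G'.dist_le t
      omega
    obtain ⟨s, hsp, hslen⟩ := hconn.exists_path_of_dist u c
    have hs2 : s.length ≤ 2 := by rw [hslen]; exact hecc c
    by_cases he : s(u,v) ∈ s.edges
    · -- the shortcut uses edge uv; derive G.Adj v c
      have hvc : G.Adj v c := by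
        cases s with
        | nil => simp at he
        | cons h1' s1 =>
          rename_i a'
          simp only [SimpleGraph.Walk.edges_cons, List.mem_cons] at he
          rcases he with he | he
          · have ha'v : a' = v := by
              exact ((Sym2.congr_right (a := u)).mp he).symm
            subst ha'v
            cases s1 with
            | nil => exact absurd rfl hcv
            | cons h2' s2 =>
              cases s2 with
              | nil => exact h2'
              | cons h3' s3 => simp [SimpleGraph.Walk.length_cons] at hs2
          · cases s1 with
            | nil => simp at he
            | cons h2' s2 =>
              cases s2 with
              | nil =>
                simp only [SimpleGraph.Walk.edges_cons, SimpleGraph.Walk.edges_nil,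
                  List.mem_singleton] at he
                rw [Sym2.eq_iff] at he
                rcases he with ⟨rfl, rfl⟩ | ⟨rfl, rfl⟩
                · exact absurd rfl hcv
                · exact absurd rfl hcu
              | cons h3' s3 => simp [SimpleGraph.Walk.length_cons] at hs2
      have hcvne : ¬ s(c, v) = s(u, v) := by
        rw [Sym2.eq_iff]
        rintro (⟨h, -⟩ | ⟨h, -⟩)
        · exact hcu h
        · exact hcv h
      have hcv' : G'.Adj c v := hedge c v hvc.symm hcvne
      have hd := G'.dist_le (t.append (.cons hcv' .nil))
      rw [SimpleGraph.Walk.length_append] at hd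
      simp only [SimpleGraph.Walk.length_cons, SimpleGraph.Walk.length_nil, ht3] at hd
      omega
    · -- the shortcut avoids edge uv; transfer to G'
      have hsub : ∀ e ∈ s.edges, e ∈ G'.edgeSet := by
        intro e hes
        exact hmemG' e (s.edges_subset_edgeSet hes) (fun hc => he (hc ▸ hes))
      have hd := G'.dist_le ((s.transfer G' hsub).append q)
      rw [SimpleGraph.Walk.length_append, SimpleGraph.Walk.length_transfer] at hd
      omega
  -- now build the cycle
  obtain ⟨r, hrp, hrlen⟩ := hreach.symm.exists_path_of_dist
  have hr4 : r.length ≤ 4 := by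
    rw [hrlen, SimpleGraph.dist_comm]; exact hdist4
  have hsub : ∀ e ∈ r.edges, e ∈ G.edgeSet := fun e hes =>
    SimpleGraph.edgeSet_subset_edgeSet.mpr hG'le (r.edges_subset_edgeSet hes)
  have hnadj : ¬ G'.Adj u v := by
    rw [hG']
    simp [huv, hne]
  refine ⟨u, .cons huv (r.transfer G hsub), ?_, ?_, ?_⟩
  · rw [SimpleGraph.Walk.cons_isCycle_iff]
    refine ⟨hrp.transfer hsub, ?_⟩
    rw [SimpleGraph.Walk.edges_transfer]
    intro hmem
    exact hnadj (r.adj_of_mem_edges hmem)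
  · simp
  · simp only [SimpleGraph.Walk.length_cons, SimpleGraph.Walk.length_transfer]
    omega
end
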